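/- For all integers m, n ≥ 0, one has R̃(V(m,n)) ⊆ V(m,n+1). -/

import Mathlib

open scoped Classical BigOperators

noncomputable section

namespace CycloMZV

/-- `mu n` is the set `μ_n` of `n`-th roots of unity in `ℂ`. -/
def mu (n : ℕ) : Set ℂ := {x : ℂ | x ^ n = 1}

variable (p M : ℕ) (ζ : ℂ)

/-- `ν_N = {ζ^m : m ≡ 1 (mod q)}` where `q = 6 - p`. -/
def nu : Set ℂ := {x : ℂ | ∃ m : ℕ, m % (6 - p) = 1 ∧ x = ζ ^ m}

/-- `v x` is the `p`-adic valuation of (the least positive) `m` with `ζ ^ m = x`. -/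
def vval (x : ℂ) : ℕ :=
  if h : ∃ m : ℕ, 0 < m ∧ ζ ^ m = x then padicValNat p (Nat.find h) else 0

/-- `Λ_c(x) = {ε ∈ ν_N : ε^(c·p^(v x)) = x}`. -/
def Lam (c : ℤ) (x : ℂ) : Set ℂ :=
  {ε : ℂ | ε ∈ nu p ζ ∧ ε ^ (c * (p : ℤ) ^ vval p ζ x) = x}

/-- Index `(ε, l)` of a basis vector `⟦ε;l⟧_p`. -/
abbrev Idx : Type := ℂ × ℕ

/-- The ambient free `𝔽_p`-module with basis `⟦ε;l⟧_p`, `(ε, l) : ℂ × ℕ`;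
the space `𝒲` is its submodule spanned by the `⟦ε;l⟧_p` with `ε ∈ ν_N`. -/
abbrev Wb (p : ℕ) := Idx →₀ ZMod p

/-- `θ(x)`. -/
def theta (x : ℂ) : Wb p :=
  if x = 1 then 0
  else ∑ᶠ c ∈ ({1, -1} : Set ℤ), ∑ᶠ ε ∈ Lam p ζ c x,
    Finsupp.single ((ε, 0) : Idx) (1 : ZMod p)

/-- `θ̃(x)`. -/
def thetaT (x : ℂ) : Wb p :=
  if x = 1 then -∑ᶠ y ∈ mu (p ^ M), theta p ζ y else theta p ζ x

/-- The ambient free module with basis indexed by `d`-tuples; `𝒲^{⊗d}` is its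
submodule spanned by the basis tensors with all `ε`'s in `ν_N`. -/
abbrev Wt (p d : ℕ) := (Fin d → Idx) →₀ ZMod p

/-- The weight-`k` part `(𝒲^{⊗d})_k`. -/
def WtPart (d k : ℕ) : Submodule (ZMod p) (Wt p d) :=
  Submodule.span (ZMod p)
    {w : Wt p d | ∃ a : Fin d → Idx, (∀ i, (a i).1 ∈ nu p ζ) ∧
      d + ∑ i, (a i).2 = k ∧ w = Finsupp.single a 1}

/-- `𝒲_1^{⊗d}`: the span of the basis tensors `⟦ε_1,…,ε_d;0,…,0⟧_p` with `ε_i ∈ ν_N`. -/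
def W1Part (d : ℕ) : Submodule (ZMod p) (Wt p d) :=
  Submodule.span (ZMod p)
    {w : Wt p d | ∃ a : Fin d → Idx, (∀ i, (a i).1 ∈ nu p ζ ∧ (a i).2 = 0) ∧
      w = Finsupp.single a 1}

/-- Delete the `i`-th entry (0-based) and append `b` at the end. -/
def moveL {d : ℕ} (i : ℕ) (a : Fin d → Idx) (b : Idx) : Fin d → Idx :=
  fun j =>
    if h2 : (j : ℕ) + 1 < d then
      (if (j : ℕ) < i then a j else a ⟨(j : ℕ) + 1, h2⟩)
    else b

/-- Delete `ε_{i+1}` and `l_i` (0-based `i`) and append `b` at the end. -/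
def moveR {d : ℕ} (i : ℕ) (a : Fin d → Idx) (b : Idx) : Fin d → Idx :=
  fun j =>
    if h2 : (j : ℕ) + 1 < d then
      (if (j : ℕ) < i then a j
       else if (j : ℕ) = i then ((a j).1, (a ⟨(j : ℕ) + 1, h2⟩).2)
       else a ⟨(j : ℕ) + 1, h2⟩)
    else b

/-- The second-to-last `l`-entry `l_{d-1}` (and `0` if `d ≤ 1`). -/
def lprev {d : ℕ} (a : Fin d → Idx) : ℕ :=
  if h : 2 ≤ d then (a ⟨d - 2, by omega⟩).2 else 0

/-- The last `l`-entry `l_d` (and `0` if `d = 0`). -/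
def llast {d : ℕ} (a : Fin d → Idx) : ℕ :=
  if h : 1 ≤ d then (a ⟨d - 1, by omega⟩).2 else 0

/-- Replace the last two `l`-entries by `s` and `r`. -/
def updEnd {d : ℕ} (a : Fin d → Idx) (s r : ℕ) : Fin d → Idx :=
  fun j =>
    if (j : ℕ) + 1 = d then ((a j).1, r)
    else if (j : ℕ) + 2 = d then ((a j).1, s)
    else a j

/-- value of `𝓔_d` on the basis tensor indexed by `a`. -/
def Ebase (d : ℕ) (a : Fin d → Idx) : Wt p d :=
  (∑ i : Fin d,
    if h : (i : ℕ) + 1 < d then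
      (if (a i).2 = 0 then
        Finsupp.mapDomain (moveL (i : ℕ) a)
          (theta p ζ ((a i).1 / (a ⟨(i : ℕ) + 1, h⟩).1))
        - Finsupp.mapDomain (moveR (i : ℕ) a)
          (theta p ζ ((a ⟨(i : ℕ) + 1, h⟩).1 / (a i).1))
      else 0)
    else 0)
  + ∑ r ∈ Finset.Icc (llast a) (lprev a + llast a),
      ((-1 : ZMod p) ^ (r - llast a) * (r.choose (llast a) : ZMod p)) •
        Finsupp.single (updEnd a (lprev a + llast a - r) r) (1 : ZMod p)

/-- The map `𝓔_d`. -/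
def Ecal (d : ℕ) : Module.End (ZMod p) (Wt p d) :=
  Finsupp.linearCombination (ZMod p) (Ebase p ζ d)

/-- value of `L̃_i` (0-based `i`) on the basis tensor indexed by `a`. -/
def LtilBase (d i : ℕ) (a : Fin d → Idx) : Wt p d :=
  if h : i + 1 < d then
    (if (a ⟨i, by omega⟩).2 = 0 then
      Finsupp.mapDomain (moveL i a)
        (thetaT p M ζ ((a ⟨i, by omega⟩).1 / (a ⟨i + 1, h⟩).1))
    else 0)
  else 0

/-- `L̃_i` (with 0-based `i`, so the paper's `L̃_i` is `Ltil p M ζ d (i-1)`). -/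
def Ltil (d i : ℕ) : Module.End (ZMod p) (Wt p d) :=
  Finsupp.linearCombination (ZMod p) (LtilBase p M ζ d i)

/-- value of `R̃_i` (0-based `i`) on the basis tensor indexed by `a`. -/
def RtilBase (d i : ℕ) (a : Fin d → Idx) : Wt p d :=
  if h : i + 1 < d then
    (if (a ⟨i, by omega⟩).2 = 0 then
      Finsupp.mapDomain (moveR i a)
        (thetaT p M ζ ((a ⟨i + 1, h⟩).1 / (a ⟨i, by omega⟩).1))
    else 0)
  else 0

/-- `R̃_i` (with 0-based `i`, so the paper's `R̃_i` is `Rtil p M ζ d (i-1)`). -/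
def Rtil (d i : ℕ) : Module.End (ZMod p) (Wt p d) :=
  Finsupp.linearCombination (ZMod p) (RtilBase p M ζ d i)

/-- value of `S` on the basis tensor indexed by `a`. -/
def Sbase (d : ℕ) (a : Fin d → Idx) : Wt p d :=
  ∑ r ∈ Finset.Icc (llast a + 1) (lprev a + llast a),
    ((-1 : ZMod p) ^ (r - llast a) * (r.choose (llast a) : ZMod p)) •
      Finsupp.single (updEnd a (lprev a + llast a - r) r) (1 : ZMod p)

/-- The map `S`. -/
def Sop (d : ℕ) : Module.End (ZMod p) (Wt p d) :=
  Finsupp.linearCombination (ZMod p) (Sbase p d)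

end CycloMZV
namespace CycloMZV

variable (p M : ℕ) (ζ : ℂ)

/-- `G = Gal(ℚ(ζ_N)/ℚ(ζ_q))`, identified with `{a ∈ (ℤ/Nℤ)ˣ : a ≡ 1 (mod q)}`. -/
def Gal : Subgroup (ZMod ((6 - p) * p ^ M))ˣ :=
  (Units.map (ZMod.castHom (show (6 - p) ∣ (6 - p) * p ^ M from ⟨p ^ M, rfl⟩)
    (ZMod (6 - p))).toMonoidHom).ker

/-- The Galois action of `a ∈ (ℤ/Nℤ)ˣ` on roots of unity: `x ↦ x^a`. -/
def gact (σ : (ZMod ((6 - p) * p ^ M))ˣ) (x : ℂ) : ℂ :=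
  x ^ ((σ : ZMod ((6 - p) * p ^ M)).val)

/-- Diagonal Galois action on index tuples. -/
def actTup {d : ℕ} (σ : (ZMod ((6 - p) * p ^ M))ˣ) (a : Fin d → Idx) : Fin d → Idx :=
  fun j => (gact p M σ ((a j).1), (a j).2)

/-- Diagonal Galois action of `σ ∈ G` on `𝒲^{⊗d}`. -/
def actW (d : ℕ) (σ : Gal p M) : Module.End (ZMod p) (Wt p d) :=
  Finsupp.lmapDomain (ZMod p) (ZMod p) (actTup p M (σ : (ZMod ((6 - p) * p ^ M))ˣ))

/-- The group algebra `𝔽_p[G]`. -/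
abbrev GA (p M : ℕ) := MonoidAlgebra (ZMod p) (Gal p M)

/-- Action of a group-algebra element `g ∈ 𝔽_p[G]` on `𝒲^{⊗d}`. -/
def actA (d : ℕ) (g : GA p M) : Module.End (ZMod p) (Wt p d) :=
  Finsupp.sum g.coeff (fun σ c => c • actW p M d σ)

/-- The augmentation ideal `I_G ⊆ 𝔽_p[G]`. -/
def IG : Ideal (GA p M) :=
  RingHom.ker (MonoidAlgebra.lift (ZMod p) (ZMod p) (Gal p M) 1).toRingHom

end CycloMZV
namespace CycloMZV

/-- The subspace `V(m,n) ⊆ 𝒲_1 ⊗ 𝒲_1`. -/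
def Vmn (p M : ℕ) (ζ : ℂ) (m n : ℕ) : Submodule (ZMod p) (Wt p 2) :=
  if n ≤ M then
    Submodule.span (ZMod p)
      {w : Wt p 2 | ∃ g ∈ IG p M ^ m, ∃ ε₁ ∈ nu p ζ, ∃ ε₂ ∈ nu p ζ,
        w = actA p M 2 g
          (∑ᶠ η ∈ mu (p ^ n),
            Finsupp.single (![((ε₁, 0) : Idx), ((η * ε₂, 0) : Idx)]) (1 : ZMod p))}
  else ⊥

end CycloMZV
namespace CycloMZV

-- ===== AUX START =====

section Aux

open Finsupp

variable {p M e : ℕ} {ζ : ℂ}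

/-! ### Roots of unity basics -/

lemma mem_mu {k : ℕ} {x : ℂ} : x ∈ mu k ↔ x ^ k = 1 := Iff.rfl

lemma mu_fin {k : ℕ} (hk : k ≠ 0) : (mu k).Finite := by
  have h : mu k ⊆ ((Polynomial.nthRoots k (1 : ℂ)).toFinset : Set ℂ) := by
    intro x hx
    exact Multiset.mem_toFinset.2 ((Polynomial.mem_nthRoots (Nat.pos_of_ne_zero hk)).2 hx)
  exact Set.Finite.subset (Finset.finite_toSet _) h

lemma one_mem_mu (k : ℕ) : (1 : ℂ) ∈ mu k := one_pow k

lemma mu_mono {k l : ℕ} (h : k ∣ l) : mu k ⊆ mu l := by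
  intro x hx
  obtain ⟨c, rfl⟩ := h
  rw [mem_mu, pow_mul, hx, one_pow]

lemma mu_mul {k : ℕ} {x y : ℂ} (hx : x ∈ mu k) (hy : y ∈ mu k) : x * y ∈ mu k := by
  rw [mem_mu, mul_pow, hx, hy, one_mul]

lemma mu_inv {k : ℕ} {x : ℂ} (hx : x ∈ mu k) : x⁻¹ ∈ mu k := by
  rw [mem_mu, inv_pow, hx, inv_one]

lemma mu_ne_zero {k : ℕ} (hk : k ≠ 0) {x : ℂ} (hx : x ∈ mu k) : x ≠ 0 := by
  rintro rfl
  rw [mem_mu, zero_pow hk] at hx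
  exact zero_ne_one hx

lemma Npos (hP : p.Prime) (hq : 6 - p = p ^ e) : (6 - p) * p ^ M ≠ 0 :=
  Nat.mul_ne_zero (hq ▸ pow_ne_zero e hP.ne_zero) (pow_ne_zero M hP.ne_zero)

lemma Npow (hq : 6 - p = p ^ e) : (6 - p) * p ^ M = p ^ (e + M) := by
  rw [hq, ← pow_add]

lemma q_two_le (hP : p.Prime) (he : e ≠ 0) (hq : 6 - p = p ^ e) : 2 ≤ 6 - p := by
  rw [hq]
  exact le_trans hP.two_le (Nat.le_self_pow he p)

lemma zeta_ne_zero (hP : p.Prime) (hq : 6 - p = p ^ e)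
    (hζ : IsPrimitiveRoot ζ ((6 - p) * p ^ M)) : ζ ≠ 0 :=
  hζ.ne_zero (Npos hP hq)

lemma zeta_pow_mod (hζ : IsPrimitiveRoot ζ ((6 - p) * p ^ M)) (i : ℕ) :
    ζ ^ i = ζ ^ (i % ((6 - p) * p ^ M)) := by
  conv_lhs => rw [← Nat.div_add_mod i ((6 - p) * p ^ M)]
  rw [pow_add, pow_mul, hζ.pow_eq_one, one_pow, one_mul]

lemma zeta_pow_eq_iff (hP : p.Prime) (hq : 6 - p = p ^ e)
    (hζ : IsPrimitiveRoot ζ ((6 - p) * p ^ M)) {i j : ℕ} :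
    ζ ^ i = ζ ^ j ↔ i ≡ j [MOD (6 - p) * p ^ M] := by
  constructor
  · intro h
    have key : ∀ i j : ℕ, i ≤ j → ζ ^ i = ζ ^ j → i ≡ j [MOD (6 - p) * p ^ M] := by
      intro i j hij h
      have h2 : ζ ^ i * ζ ^ (j - i) = ζ ^ i * 1 := by
        rw [← pow_add, Nat.add_sub_cancel' hij, h, mul_one]
      have h3 : ζ ^ (j - i) = 1 :=
        mul_left_cancel₀ (pow_ne_zero i (zeta_ne_zero hP hq hζ)) h2
      exact (Nat.modEq_iff_dvd' hij).2 ((hζ.pow_eq_one_iff_dvd _).1 h3) |>.symm |>.symm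
    rcases le_total i j with hij | hij
    · exact key i j hij h
    · exact (key j i hij h.symm).symm
  · intro h
    rw [zeta_pow_mod hζ i, zeta_pow_mod hζ j, h]

/-! ### `nu` and `Lam` basics -/

lemma nu_subset_mu (hζ : IsPrimitiveRoot ζ ((6 - p) * p ^ M)) :
    nu p ζ ⊆ mu ((6 - p) * p ^ M) := by
  rintro x ⟨m, hm, rfl⟩
  rw [mem_mu, ← pow_mul, mul_comm, pow_mul, hζ.pow_eq_one, one_pow]

lemma nu_ne_zero (hP : p.Prime) (hq : 6 - p = p ^ e)
    (hζ : IsPrimitiveRoot ζ ((6 - p) * p ^ M)) {x : ℂ} (hx : x ∈ nu p ζ) : x ≠ 0 := by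
  obtain ⟨m, hm, rfl⟩ := hx
  exact pow_ne_zero m (zeta_ne_zero hP hq hζ)

lemma nu_fin (hP : p.Prime) (hq : 6 - p = p ^ e)
    (hζ : IsPrimitiveRoot ζ ((6 - p) * p ^ M)) : (nu p ζ).Finite :=
  (mu_fin (Npos hP hq)).subset (nu_subset_mu hζ)

lemma zeta_pow_mul_nu (hP : p.Prime) (he : e ≠ 0) (hq : 6 - p = p ^ e)
    {j : ℕ} (hj : (6 - p) ∣ j) {x : ℂ} (hx : x ∈ nu p ζ) : ζ ^ j * x ∈ nu p ζ := by
  obtain ⟨m, hm, rfl⟩ := hx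
  refine ⟨j + m, ?_, (pow_add ζ j m).symm⟩
  have hq2 : 2 ≤ 6 - p := q_two_le hP he hq
  have hj0 : j % (6 - p) = 0 := Nat.mod_eq_zero_of_dvd hj
  rw [Nat.add_mod, hj0, hm]
  simpa using Nat.mod_eq_of_lt (show 1 < 6 - p by omega)

lemma lam_subset_nu {c : ℤ} {x : ℂ} : Lam p ζ c x ⊆ nu p ζ := fun _ h => h.1

lemma lam_fin (hP : p.Prime) (hq : 6 - p = p ^ e)
    (hζ : IsPrimitiveRoot ζ ((6 - p) * p ^ M)) {c : ℤ} {x : ℂ} : (Lam p ζ c x).Finite :=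
  (nu_fin hP hq hζ).subset lam_subset_nu

/-! ### `padicValNat` helpers -/

lemma padic_eq (hP : p.Prime) {t v : ℕ} (ht : t ≠ 0) (h1 : p ^ v ∣ t)
    (h2 : ¬ p ^ (v + 1) ∣ t) : padicValNat p t = v := by
  have hf := Nat.factorization_def t hP
  have a1 := (hP.pow_dvd_iff_le_factorization ht).mp h1
  have a2 : ¬ (v + 1 ≤ t.factorization p) := fun h =>
    h2 ((hP.pow_dvd_iff_le_factorization ht).mpr h)
  omega

lemma padic_spec (hP : p.Prime) {t : ℕ} (ht : t ≠ 0) :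
    p ^ padicValNat p t ∣ t ∧ ¬ p ^ (padicValNat p t + 1) ∣ t := by
  refine ⟨pow_padicValNat_dvd, fun h => ?_⟩
  have := (hP.pow_dvd_iff_le_factorization ht).mp h
  rw [Nat.factorization_def t hP] at this
  omega

/-! ### `vval` -/

lemma vval_eq (hP : p.Prime) (hq : 6 - p = p ^ e)
    (hζ : IsPrimitiveRoot ζ ((6 - p) * p ^ M)) {y : ℂ} {t : ℕ} (ht0 : 0 < t)
    (htN : ¬ (6 - p) * p ^ M ∣ t) (hty : ζ ^ t = y) :
    vval p ζ y = padicValNat p t := by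
  have hNpos : 0 < (6 - p) * p ^ M := Nat.pos_of_ne_zero (Npos hP hq)
  have hex : ∃ m, 0 < m ∧ ζ ^ m = y := ⟨t, ht0, hty⟩
  rw [vval, dif_pos hex]
  obtain ⟨h0, hy0⟩ := Nat.find_spec hex
  have hmod : ζ ^ (t % ((6 - p) * p ^ M)) = y := by rw [← zeta_pow_mod hζ, hty]
  have hmpos : 0 < t % ((6 - p) * p ^ M) :=
    Nat.pos_of_ne_zero fun h => htN (Nat.dvd_of_mod_eq_zero h)
  have h1 : Nat.find hex ≤ t % ((6 - p) * p ^ M) := Nat.find_min' hex ⟨hmpos, hmod⟩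
  have hcong : Nat.find hex ≡ t % ((6 - p) * p ^ M) [MOD (6 - p) * p ^ M] :=
    (zeta_pow_eq_iff hP hq hζ).1 (hy0.trans hmod.symm)
  have h2 : Nat.find hex = t % ((6 - p) * p ^ M) := by
    have hlt : t % ((6 - p) * p ^ M) < (6 - p) * p ^ M := Nat.mod_lt _ hNpos
    have h3 := hcong
    unfold Nat.ModEq at h3
    rwa [Nat.mod_eq_of_lt (lt_of_le_of_lt h1 hlt), Nat.mod_eq_of_lt hlt] at h3
  rw [h2]
  obtain ⟨d1, d2⟩ := padic_spec hP (show t % ((6 - p) * p ^ M) ≠ 0 by omega)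
  set v := padicValNat p (t % ((6 - p) * p ^ M)) with hv
  have hvle : p ^ v ≤ t % ((6 - p) * p ^ M) := Nat.le_of_dvd hmpos d1
  have hvlt : v < e + M := by
    have hlt2 : p ^ v < p ^ (e + M) := by
      refine lt_of_le_of_lt hvle ?_
      rw [← Npow hq]
      exact Nat.mod_lt _ hNpos
    exact (Nat.pow_lt_pow_iff_right hP.one_lt).1 hlt2
  symm
  apply padic_eq hP (by omega : t ≠ 0)
  · have hNd : p ^ v ∣ (6 - p) * p ^ M := by
      rw [Npow hq]; exact pow_dvd_pow p (le_of_lt hvlt)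
    conv_rhs => rw [← Nat.mod_add_div t ((6 - p) * p ^ M)]
    exact dvd_add d1 (hNd.mul_right _)
  · intro hcon
    have hNd : p ^ (v + 1) ∣ (6 - p) * p ^ M := by
      rw [Npow hq]; exact pow_dvd_pow p hvlt
    have heq : t % ((6 - p) * p ^ M) = t - (6 - p) * p ^ M * (t / ((6 - p) * p ^ M)) := by
      have := Nat.mod_add_div t ((6 - p) * p ^ M); omega
    apply d2
    rw [heq]
    exact Nat.dvd_sub hcon (hNd.mul_right _)

lemma rep_mu (hP : p.Prime) (he : e ≠ 0) (hq : 6 - p = p ^ e)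
    (hζ : IsPrimitiveRoot ζ ((6 - p) * p ^ M)) {y : ℂ} (hy : y ∈ mu (p ^ M)) (hy1 : y ≠ 1) :
    ∃ i : ℕ, 0 < i ∧ i < (6 - p) * p ^ M ∧ ζ ^ i = y ∧ vval p ζ y = padicValNat p i ∧
      e ≤ padicValNat p i ∧ padicValNat p i < e + M ∧
      p ^ padicValNat p i ∣ i ∧ ¬ p ^ (padicValNat p i + 1) ∣ i := by
  haveI : NeZero ((6 - p) * p ^ M) := ⟨Npos hP hq⟩
  have hyN : y ^ ((6 - p) * p ^ M) = 1 := by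
    rw [mul_comm, pow_mul, mem_mu.1 hy, one_pow]
  obtain ⟨i, hiN, hiy⟩ := hζ.eq_pow_of_pow_eq_one hyN
  have hi0 : i ≠ 0 := by rintro rfl; rw [pow_zero] at hiy; exact hy1 hiy.symm
  have hdvd : p ^ e ∣ i := by
    have h1 : ζ ^ (i * p ^ M) = 1 := by rw [pow_mul, hiy, mem_mu.1 hy]
    have h2 := (hζ.pow_eq_one_iff_dvd _).1 h1
    rw [hq] at h2
    exact (Nat.mul_dvd_mul_iff_right (pow_pos hP.pos M)).1 h2
  have hNdi : ¬ (6 - p) * p ^ M ∣ i := fun h =>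
    absurd (Nat.le_of_dvd (Nat.pos_of_ne_zero hi0) h) (not_le.2 hiN)
  have hvv := vval_eq hP hq hζ (Nat.pos_of_ne_zero hi0) hNdi hiy
  obtain ⟨d1, d2⟩ := padic_spec hP hi0
  have hev : e ≤ padicValNat p i := by
    by_contra hcon
    push_neg at hcon
    exact d2 (dvd_trans (pow_dvd_pow p (by omega)) hdvd)
  have hlt : padicValNat p i < e + M := by
    have h3 : p ^ padicValNat p i < p ^ (e + M) := by
      refine lt_of_le_of_lt (Nat.le_of_dvd (Nat.pos_of_ne_zero hi0) d1) ?_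
      rw [← Npow hq]; exact hiN
    exact (Nat.pow_lt_pow_iff_right hP.one_lt).1 h3
  exact ⟨i, Nat.pos_of_ne_zero hi0, hiN, hiy, hvv, hev, hlt, d1, d2⟩

/-! ### The twisting element `ρ^(c·p^v)` -/

lemma rho_pow (hP : p.Prime) (he : e ≠ 0) (hq : 6 - p = p ^ e)
    (hζ : IsPrimitiveRoot ζ ((6 - p) * p ^ M)) {n : ℕ} (hnM : n < M) (c : ℤ)
    (hc : c = 1 ∨ c = -1) {v : ℕ} (hv : 1 ≤ v) :
    ∃ r : ℕ, (ζ ^ ((6 - p) * p ^ (M - n - 1))) ^ (c * (p : ℤ) ^ v) = ζ ^ r ∧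
      p ^ (e + M - n) ∣ r ∧ p ^ (v + 1) ∣ r ∧ r < (6 - p) * p ^ M := by
  have hNpos : 0 < (6 - p) * p ^ M := Nat.pos_of_ne_zero (Npos hP hq)
  set K := e + (M - n - 1) + v with hK
  have hser : (ζ ^ ((6 - p) * p ^ (M - n - 1))) ^ (p ^ v : ℕ) = ζ ^ p ^ K := by
    rw [← pow_mul, hq, hK, pow_add, pow_add, ← pow_add]
  have hzpow : (ζ ^ ((6 - p) * p ^ (M - n - 1))) ^ (c * (p : ℤ) ^ v) =
      ((ζ ^ ((6 - p) * p ^ (M - n - 1))) ^ (p ^ v : ℕ)) ^ c := by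
    rw [mul_comm c, zpow_mul]
    norm_cast
  by_cases hKM : e + M ≤ K
  · refine ⟨0, ?_, dvd_zero _, dvd_zero _, hNpos⟩
    rw [hzpow, hser]
    have h1 : ζ ^ (p ^ K : ℕ) = 1 := by
      apply (hζ.pow_eq_one_iff_dvd _).2
      rw [Npow hq]
      exact pow_dvd_pow p hKM
    rw [h1, one_zpow, pow_zero]
  · push_neg at hKM
    have hK1 : p ^ K < (6 - p) * p ^ M := by
      rw [Npow hq]
      exact Nat.pow_lt_pow_right hP.one_lt hKM
    have hd1 : e + M - n ≤ K := by omega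
    have hd2 : v + 1 ≤ K := by omega
    rcases hc with rfl | rfl
    · exact ⟨p ^ K, by rw [hzpow, hser, zpow_one], pow_dvd_pow p hd1, pow_dvd_pow p hd2, hK1⟩
    · have hKpos : 0 < p ^ K := pow_pos hP.pos K
      refine ⟨(6 - p) * p ^ M - p ^ K, ?_, ?_, ?_, by omega⟩
      · rw [hzpow, hser]
        have hmul : ζ ^ (p ^ K : ℕ) * ζ ^ ((6 - p) * p ^ M - p ^ K) = 1 := by
          rw [← pow_add, Nat.add_sub_cancel' (le_of_lt hK1)]
          exact hζ.pow_eq_one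
        rw [zpow_neg_one]
        exact inv_eq_of_mul_eq_one_right hmul
      · exact Nat.dvd_sub (by rw [Npow hq]; exact pow_dvd_pow p (by omega)) (pow_dvd_pow p hd1)
      · exact Nat.dvd_sub (by rw [Npow hq]; exact pow_dvd_pow p (by omega)) (pow_dvd_pow p hd2)

lemma sigma_spec (hP : p.Prime) (he : e ≠ 0) (hq : 6 - p = p ^ e)
    (hζ : IsPrimitiveRoot ζ ((6 - p) * p ^ M)) {n : ℕ} (hnM : n < M) {y : ℂ}
    (hy : y ∈ mu (p ^ M)) (hy1 : y ≠ 1) (c : ℤ) (hc : c = 1 ∨ c = -1) :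
    y * (ζ ^ ((6 - p) * p ^ (M - n - 1))) ^ (c * (p : ℤ) ^ vval p ζ y) ∈ mu (p ^ M) ∧
    y * (ζ ^ ((6 - p) * p ^ (M - n - 1))) ^ (c * (p : ℤ) ^ vval p ζ y) ≠ 1 ∧
    vval p ζ (y * (ζ ^ ((6 - p) * p ^ (M - n - 1))) ^ (c * (p : ℤ) ^ vval p ζ y)) =
      vval p ζ y ∧
    (ζ ^ ((6 - p) * p ^ (M - n - 1))) ^ (c * (p : ℤ) ^ vval p ζ y) ∈ mu (p ^ n) := by
  obtain ⟨i, hi0, hiN, hiy, hvv, hev, hvlt, hd1, hd2⟩ := rep_mu hP he hq hζ hy hy1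
  set v := padicValNat p i with hvdef
  obtain ⟨r, hreq, hr1, hr2, hrN⟩ := rho_pow hP he hq hζ hnM c hc (v := v) (by omega)
  rw [hvv, hreq]
  have hir0 : i + r ≠ 0 := by omega
  have hpvir : p ^ v ∣ i + r := dvd_add hd1 (dvd_trans (pow_dvd_pow p (by omega)) hr2)
  have hpv1ir : ¬ p ^ (v + 1) ∣ i + r := fun h => hd2 (by
    have := Nat.dvd_sub h hr2
    simpa using this)
  have hNir : ¬ (6 - p) * p ^ M ∣ i + r := by
    intro h
    have h2 : p ^ (v + 1) ∣ (6 - p) * p ^ M := by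
      rw [Npow hq]; exact pow_dvd_pow p (by omega)
    exact hpv1ir (dvd_trans h2 h)
  have hyweq : y * ζ ^ r = ζ ^ (i + r) := by rw [pow_add, hiy]
  have hne1 : y * ζ ^ r ≠ 1 := by
    rw [hyweq]
    intro h
    exact hNir ((hζ.pow_eq_one_iff_dvd _).1 h)
  have hvval : vval p ζ (y * ζ ^ r) = padicValNat p i := by
    rw [vval_eq hP hq hζ (Nat.pos_of_ne_zero hir0) hNir hyweq.symm]
    exact padic_eq hP hir0 hpvir hpv1ir
  have hmem : y * ζ ^ r ∈ mu (p ^ M) := by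
    rw [hyweq, mem_mu, ← pow_mul]
    apply (hζ.pow_eq_one_iff_dvd _).2
    have hpe : p ^ e ∣ i + r := by
      refine dvd_add (dvd_trans (pow_dvd_pow p hev) hd1) ?_
      exact dvd_trans (pow_dvd_pow p (by omega)) hr1
    rw [hq]
    exact Nat.mul_dvd_mul hpe dvd_rfl
  have hrmu : ζ ^ r ∈ mu (p ^ n) := by
    rw [mem_mu, ← pow_mul]
    apply (hζ.pow_eq_one_iff_dvd _).2
    obtain ⟨d, rfl⟩ := hr1
    rw [Npow hq]
    refine ⟨d, ?_⟩
    rw [mul_comm (p ^ (e + M - n) * d) (p ^ n), ← mul_assoc, ← pow_add]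
    congr 2
    omega
  exact ⟨hmem, hne1, hvval, hrmu⟩

/-! ### Twisting `Lam` -/

lemma mem_lam_twist (hP : p.Prime) (he : e ≠ 0) (hq : 6 - p = p ^ e)
    (hζ : IsPrimitiveRoot ζ ((6 - p) * p ^ M)) {n : ℕ} (hnM : n < M) {y : ℂ}
    (hy : y ∈ mu (p ^ M)) (hy1 : y ≠ 1) (c : ℤ) (hc : c = 1 ∨ c = -1) {ε : ℂ}
    (hε : ε ∈ Lam p ζ c y) :
    ζ ^ ((6 - p) * p ^ (M - n - 1)) * ε ∈
      Lam p ζ c (y * (ζ ^ ((6 - p) * p ^ (M - n - 1))) ^ (c * (p : ℤ) ^ vval p ζ y)) := by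
  obtain ⟨hεnu, hεpow⟩ := hε
  have hv' := (sigma_spec hP he hq hζ hnM hy hy1 c hc).2.2.1
  refine ⟨zeta_pow_mul_nu hP he hq ⟨p ^ (M - n - 1), rfl⟩ hεnu, ?_⟩
  rw [hv', mul_zpow, hεpow]
  exact mul_comm _ _

lemma mem_lam_twist_inv (hP : p.Prime) (he : e ≠ 0) (hq : 6 - p = p ^ e)
    (hζ : IsPrimitiveRoot ζ ((6 - p) * p ^ M)) {n : ℕ} (hnM : n < M) {y : ℂ}
    (hy : y ∈ mu (p ^ M)) (hy1 : y ≠ 1) (c : ℤ) (hc : c = 1 ∨ c = -1) {ε' : ℂ}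
    (hε' : ε' ∈ Lam p ζ c
      (y * (ζ ^ ((6 - p) * p ^ (M - n - 1))) ^ (c * (p : ℤ) ^ vval p ζ y))) :
    (ζ ^ ((6 - p) * p ^ (M - n - 1)))⁻¹ * ε' ∈ Lam p ζ c y := by
  obtain ⟨hεnu, hεpow⟩ := hε'
  have hv' := (sigma_spec hP he hq hζ hnM hy hy1 c hc).2.2.1
  rw [hv'] at hεpow
  have hρ0 : ζ ^ ((6 - p) * p ^ (M - n - 1)) ≠ 0 :=
    pow_ne_zero _ (zeta_ne_zero hP hq hζ)
  have hle : (6 - p) * p ^ (M - n - 1) ≤ (6 - p) * p ^ M :=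
    Nat.mul_le_mul_left _ (Nat.pow_le_pow_right hP.pos (by omega))
  have hjeq : ζ ^ ((6 - p) * p ^ M - (6 - p) * p ^ (M - n - 1)) =
      (ζ ^ ((6 - p) * p ^ (M - n - 1)))⁻¹ := by
    apply eq_inv_of_mul_eq_one_left
    rw [← pow_add]
    rw [Nat.sub_add_cancel hle]
    exact hζ.pow_eq_one
  constructor
  · rw [← hjeq]
    exact zeta_pow_mul_nu hP he hq (Nat.dvd_sub (Dvd.intro _ rfl) (Dvd.intro _ rfl)) hεnu
  · rw [mul_zpow, inv_zpow, hεpow]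
    rw [mul_comm y, ← mul_assoc, inv_mul_cancel₀ (zpow_ne_zero _ hρ0), one_mul]


/-! ### `theta` as finite sums -/

def thetaSum (p : ℕ) (ζ : ℂ) (c : ℤ) (x : ℂ) : Wb p :=
  ∑ᶠ ε ∈ Lam p ζ c x, Finsupp.single ((ε, 0) : Idx) (1 : ZMod p)

lemma finsum_mem_fin {β : Type*} [AddCommMonoid β] {S : Set ℂ} (hS : S.Finite) (f : ℂ → β) :
    ∑ᶠ y ∈ S, f y = ∑ y ∈ hS.toFinset, f y := by
  have h := finsum_mem_coe_finset f hS.toFinset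
  rwa [hS.coe_toFinset] at h

lemma thetaSum_eq (hP : p.Prime) (hq : 6 - p = p ^ e)
    (hζ : IsPrimitiveRoot ζ ((6 - p) * p ^ M)) (c : ℤ) (x : ℂ) :
    thetaSum p ζ c x = ∑ ε ∈ (lam_fin hP hq hζ (c := c) (x := x)).toFinset,
      Finsupp.single ((ε, 0) : Idx) (1 : ZMod p) :=
  finsum_mem_fin _ _

lemma theta_one : theta p ζ 1 = 0 := by rw [theta, if_pos rfl]

lemma theta_eq {x : ℂ} (hx : x ≠ 1) :
    theta p ζ x = thetaSum p ζ 1 x + thetaSum p ζ (-1) x := by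
  rw [theta, if_neg hx, finsum_mem_pair (by decide : (1 : ℤ) ≠ -1)]
  rfl

lemma thetaT_one (hpM : (p : ℕ) ^ M ≠ 0) :
    thetaT p M ζ 1 = -∑ y ∈ (mu_fin hpM).toFinset, theta p ζ y := by
  rw [thetaT, if_pos rfl, finsum_mem_fin (mu_fin hpM)]

lemma thetaT_ne {x : ℂ} (hx : x ≠ 1) : thetaT p M ζ x = theta p ζ x := by
  rw [thetaT, if_neg hx]

lemma thetaSum_support (hP : p.Prime) (hq : 6 - p = p ^ e)
    (hζ : IsPrimitiveRoot ζ ((6 - p) * p ^ M)) (c : ℤ) (x : ℂ) :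
    ∀ i ∈ (thetaSum p ζ c x).support, i.1 ∈ nu p ζ ∧ i.2 = 0 := by
  intro i hi
  rw [thetaSum_eq hP hq hζ] at hi
  obtain ⟨ε, hε1, hε2⟩ := Finset.mem_biUnion.1 (Finsupp.support_finset_sum hi)
  have h3 : i = (ε, 0) := Finset.mem_singleton.1 (Finsupp.support_single_subset hε2)
  subst h3
  exact ⟨lam_subset_nu ((lam_fin hP hq hζ).mem_toFinset.1 hε1), rfl⟩

lemma theta_support (hP : p.Prime) (hq : 6 - p = p ^ e)
    (hζ : IsPrimitiveRoot ζ ((6 - p) * p ^ M)) (x : ℂ) :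
    ∀ i ∈ (theta p ζ x).support, i.1 ∈ nu p ζ ∧ i.2 = 0 := by
  by_cases hx : x = 1
  · subst hx; rw [theta_one]; intro i hi; simp at hi
  · rw [theta_eq hx]
    intro i hi
    rcases Finset.mem_union.1 (Finsupp.support_add hi) with h | h
    · exact thetaSum_support hP hq hζ 1 x i h
    · exact thetaSum_support hP hq hζ (-1) x i h

lemma thetaT_support (hP : p.Prime) (hq : 6 - p = p ^ e)
    (hζ : IsPrimitiveRoot ζ ((6 - p) * p ^ M)) (x : ℂ) :
    ∀ i ∈ (thetaT p M ζ x).support, i.1 ∈ nu p ζ ∧ i.2 = 0 := by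
  by_cases hx : x = 1
  · subst hx
    rw [thetaT_one (pow_ne_zero M hP.ne_zero)]
    intro i hi
    rw [Finsupp.support_neg] at hi
    obtain ⟨y, hy1, hy2⟩ := Finset.mem_biUnion.1 (Finsupp.support_finset_sum hi)
    exact theta_support hP hq hζ y i hy2
  · rw [thetaT_ne hx]; exact theta_support hP hq hζ x

lemma sum_thetaT_zero (hpM : (p : ℕ) ^ M ≠ 0) :
    ∑ y ∈ (mu_fin hpM).toFinset, thetaT p M ζ y = 0 := by
  have h1 : (1 : ℂ) ∈ (mu_fin hpM).toFinset :=
    (mu_fin hpM).mem_toFinset.2 (one_mem_mu _)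
  rw [← Finset.add_sum_erase _ _ h1]
  rw [Finset.sum_congr rfl (fun y hy => thetaT_ne (Finset.ne_of_mem_erase hy))]
  rw [Finset.sum_erase _ theta_one, thetaT_one hpM]
  exact neg_add_cancel _

/-! ### Invariance of sums of `theta` under the twist -/

lemma thetaSum_twist (hP : p.Prime) (he : e ≠ 0) (hq : 6 - p = p ^ e)
    (hζ : IsPrimitiveRoot ζ ((6 - p) * p ^ M)) {n : ℕ} (hnM : n < M) {y : ℂ}
    (hy : y ∈ mu (p ^ M)) (hy1 : y ≠ 1) (c : ℤ) (hc : c = 1 ∨ c = -1) :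
    Finsupp.mapDomain (fun i : Idx => (ζ ^ ((6 - p) * p ^ (M - n - 1)) * i.1, i.2))
      (thetaSum p ζ c y) =
    thetaSum p ζ c (y * (ζ ^ ((6 - p) * p ^ (M - n - 1))) ^ (c * (p : ℤ) ^ vval p ζ y)) := by
  have hρ0 : ζ ^ ((6 - p) * p ^ (M - n - 1)) ≠ 0 := pow_ne_zero _ (zeta_ne_zero hP hq hζ)
  rw [thetaSum_eq hP hq hζ, thetaSum_eq hP hq hζ]
  rw [← Finsupp.lmapDomain_apply (ZMod p) (ZMod p), map_sum]
  simp only [Finsupp.lmapDomain_apply, Finsupp.mapDomain_single]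
  refine Finset.sum_nbij' (fun ε => ζ ^ ((6 - p) * p ^ (M - n - 1)) * ε)
    (fun ε' => (ζ ^ ((6 - p) * p ^ (M - n - 1)))⁻¹ * ε') ?_ ?_ ?_ ?_ ?_
  · intro a ha
    exact (lam_fin hP hq hζ).mem_toFinset.2
      (mem_lam_twist hP he hq hζ hnM hy hy1 c hc ((lam_fin hP hq hζ).mem_toFinset.1 ha))
  · intro a ha
    exact (lam_fin hP hq hζ).mem_toFinset.2
      (mem_lam_twist_inv hP he hq hζ hnM hy hy1 c hc ((lam_fin hP hq hζ).mem_toFinset.1 ha))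
  · intro a _; exact inv_mul_cancel_left₀ hρ0 a
  · intro a _; exact mul_inv_cancel_left₀ hρ0 a
  · intro a _; rfl

lemma sum_thetaSum_reindex (hP : p.Prime) (he : e ≠ 0) (hq : 6 - p = p ^ e)
    (hζ : IsPrimitiveRoot ζ ((6 - p) * p ^ M)) {n : ℕ} (hnM : n < M) (S : Finset ℂ)
    (hmem : ∀ y ∈ S, y ∈ mu (p ^ M) ∧ y ≠ 1)
    (hcl : ∀ y ∈ S, ∀ c : ℤ, (c = 1 ∨ c = -1) →
      y * (ζ ^ ((6 - p) * p ^ (M - n - 1))) ^ (c * (p : ℤ) ^ vval p ζ y) ∈ S)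
    (c : ℤ) (hc : c = 1 ∨ c = -1) :
    ∑ y ∈ S, thetaSum p ζ c
        (y * (ζ ^ ((6 - p) * p ^ (M - n - 1))) ^ (c * (p : ℤ) ^ vval p ζ y)) =
      ∑ y ∈ S, thetaSum p ζ c y := by
  have hρ0 : ζ ^ ((6 - p) * p ^ (M - n - 1)) ≠ 0 := pow_ne_zero _ (zeta_ne_zero hP hq hζ)
  have hc' : -c = 1 ∨ -c = -1 := by rcases hc with rfl | rfl <;> simp
  refine Finset.sum_nbij'
    (fun y => y * (ζ ^ ((6 - p) * p ^ (M - n - 1))) ^ (c * (p : ℤ) ^ vval p ζ y))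
    (fun z => z * (ζ ^ ((6 - p) * p ^ (M - n - 1))) ^ (-c * (p : ℤ) ^ vval p ζ z))
    ?_ ?_ ?_ ?_ ?_
  · intro a ha; exact hcl a ha c hc
  · intro a ha; exact hcl a ha (-c) hc'
  · intro a ha
    have hvv := (sigma_spec hP he hq hζ hnM (hmem a ha).1 (hmem a ha).2 c hc).2.2.1
    rw [hvv, neg_mul, zpow_neg, mul_assoc, mul_inv_cancel₀ (zpow_ne_zero _ hρ0), mul_one]
  · intro a ha
    have hvv := (sigma_spec hP he hq hζ hnM (hmem a ha).1 (hmem a ha).2 (-c) hc').2.2.1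
    rw [hvv, neg_mul, zpow_neg, mul_assoc, inv_mul_cancel₀ (zpow_ne_zero _ hρ0), mul_one]
  · intro a _; rfl

lemma sum_theta_invariant (hP : p.Prime) (he : e ≠ 0) (hq : 6 - p = p ^ e)
    (hζ : IsPrimitiveRoot ζ ((6 - p) * p ^ M)) {n : ℕ} (hnM : n < M) (S : Finset ℂ)
    (hmem : ∀ y ∈ S, y ∈ mu (p ^ M) ∧ y ≠ 1)
    (hcl : ∀ y ∈ S, ∀ c : ℤ, (c = 1 ∨ c = -1) →
      y * (ζ ^ ((6 - p) * p ^ (M - n - 1))) ^ (c * (p : ℤ) ^ vval p ζ y) ∈ S) :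
    Finsupp.mapDomain (fun i : Idx => (ζ ^ ((6 - p) * p ^ (M - n - 1)) * i.1, i.2))
      (∑ y ∈ S, theta p ζ y) = ∑ y ∈ S, theta p ζ y := by
  rw [← Finsupp.lmapDomain_apply (ZMod p) (ZMod p), map_sum]
  simp only [Finsupp.lmapDomain_apply]
  have hterm : ∀ y ∈ S,
      Finsupp.mapDomain (fun i : Idx => (ζ ^ ((6 - p) * p ^ (M - n - 1)) * i.1, i.2))
        (theta p ζ y) =
      thetaSum p ζ 1 (y * (ζ ^ ((6 - p) * p ^ (M - n - 1))) ^ (1 * (p : ℤ) ^ vval p ζ y)) +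
      thetaSum p ζ (-1)
        (y * (ζ ^ ((6 - p) * p ^ (M - n - 1))) ^ (-1 * (p : ℤ) ^ vval p ζ y)) := by
    intro y hy
    rw [theta_eq (hmem y hy).2, Finsupp.mapDomain_add,
      thetaSum_twist hP he hq hζ hnM (hmem y hy).1 (hmem y hy).2 1 (Or.inl rfl),
      thetaSum_twist hP he hq hζ hnM (hmem y hy).1 (hmem y hy).2 (-1) (Or.inr rfl)]
  rw [Finset.sum_congr rfl hterm, Finset.sum_add_distrib]
  rw [sum_thetaSum_reindex hP he hq hζ hnM S hmem hcl 1 (Or.inl rfl)]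
  rw [sum_thetaSum_reindex hP he hq hζ hnM S hmem hcl (-1) (Or.inr rfl)]
  rw [← Finset.sum_add_distrib]
  exact (Finset.sum_congr rfl fun y hy => theta_eq (hmem y hy).2).symm

/-! ### `nu` is stable under multiplication by small roots of unity -/

lemma mu_mul_nu (hP : p.Prime) (he : e ≠ 0) (hq : 6 - p = p ^ e)
    (hζ : IsPrimitiveRoot ζ ((6 - p) * p ^ M)) {k : ℕ} (hk : k ≤ M) {η x : ℂ}
    (hη : η ∈ mu (p ^ k)) (hx : x ∈ nu p ζ) : η * x ∈ nu p ζ := by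
  haveI : NeZero ((6 - p) * p ^ M) := ⟨Npos hP hq⟩
  have hηN : η ^ ((6 - p) * p ^ M) = 1 :=
    mu_mono (dvd_trans (pow_dvd_pow p hk) (dvd_mul_left _ _)) hη
  obtain ⟨r, hrN, hrη⟩ := hζ.eq_pow_of_pow_eq_one hηN
  have hqr : (6 - p) ∣ r := by
    have h1 : ζ ^ (r * p ^ k) = 1 := by rw [pow_mul, hrη, mem_mu.1 hη]
    have h2 := (hζ.pow_eq_one_iff_dvd _).1 h1
    rw [Npow hq] at h2
    have h3 : p ^ (e + M - k) * p ^ k ∣ r * p ^ k := by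
      rw [← pow_add, show e + M - k + k = e + M by omega]
      exact h2
    have h4 : p ^ (e + M - k) ∣ r := (Nat.mul_dvd_mul_iff_right (pow_pos hP.pos k)).1 h3
    rw [hq]
    exact dvd_trans (pow_dvd_pow p (by omega)) h4
  rw [← hrη]
  exact zeta_pow_mul_nu hP he hq hqr hx

/-! ### Invariant vectors are spanned by orbit sums -/

lemma mem_orbK (hP : p.Prime) (he : e ≠ 0) (hq : 6 - p = p ^ e)
    (hζ : IsPrimitiveRoot ζ ((6 - p) * p ^ M)) {n : ℕ} (hnM : n < M) (T : Wb p)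
    (hsupp : ∀ i ∈ T.support, i.1 ∈ nu p ζ ∧ i.2 = 0)
    (hinv : Finsupp.mapDomain
      (fun i : Idx => (ζ ^ ((6 - p) * p ^ (M - n - 1)) * i.1, i.2)) T = T) :
    T ∈ Submodule.span (ZMod p)
      {w : Wb p | ∃ ε ∈ nu p ζ, w = ∑ᶠ η ∈ mu (p ^ (n + 1)),
        Finsupp.single ((η * ε, 0) : Idx) (1 : ZMod p)} := by
  have hρ0 : ζ ^ ((6 - p) * p ^ (M - n - 1)) ≠ 0 := pow_ne_zero _ (zeta_ne_zero hP hq hζ)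
  have hfinj : Function.Injective
      (fun i : Idx => (ζ ^ ((6 - p) * p ^ (M - n - 1)) * i.1, i.2)) := by
    rintro ⟨a1, a2⟩ ⟨b1, b2⟩ h
    simp only [Prod.mk.injEq] at h ⊢
    exact ⟨mul_left_cancel₀ hρ0 h.1, h.2⟩
  have hρprim : IsPrimitiveRoot (ζ ^ ((6 - p) * p ^ (M - n - 1))) (p ^ (n + 1)) := by
    refine hζ.pow (Nat.pos_of_ne_zero (Npos hP hq)) ?_
    rw [mul_assoc, ← pow_add, show M - n - 1 + (n + 1) = M by omega]
  have hρmem : ζ ^ ((6 - p) * p ^ (M - n - 1)) ∈ mu (p ^ (n + 1)) := hρprim.pow_eq_one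
  haveI : NeZero ((p : ℕ) ^ (n + 1)) := ⟨pow_ne_zero _ hP.ne_zero⟩
  suffices H : ∀ m : ℕ, ∀ T : Wb p, T.support.card ≤ m →
      (∀ i ∈ T.support, i.1 ∈ nu p ζ ∧ i.2 = 0) →
      Finsupp.mapDomain
        (fun i : Idx => (ζ ^ ((6 - p) * p ^ (M - n - 1)) * i.1, i.2)) T = T →
      T ∈ Submodule.span (ZMod p)
        {w : Wb p | ∃ ε ∈ nu p ζ, w = ∑ᶠ η ∈ mu (p ^ (n + 1)),
          Finsupp.single ((η * ε, 0) : Idx) (1 : ZMod p)} by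
    exact H T.support.card T le_rfl hsupp hinv
  clear hsupp hinv T
  intro m
  induction m with
  | zero =>
    intro T hcard _ _
    have hT0 : T = 0 := by
      rw [← Finsupp.support_eq_empty]
      exact Finset.card_eq_zero.1 (Nat.le_zero.1 hcard)
    rw [hT0]
    exact Submodule.zero_mem _
  | succ m ih =>
    intro T hcard hsupp hinv
    by_cases hT0 : T = 0
    · rw [hT0]; exact Submodule.zero_mem _
    obtain ⟨⟨ε, l⟩, hmem⟩ := Finsupp.support_nonempty_iff.2 hT0
    obtain ⟨hεnu, hl0⟩ := hsupp _ hmem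
    obtain rfl : l = 0 := hl0
    have hεne : ε ≠ 0 := nu_ne_zero hP hq hζ hεnu
    have hpn1 : (p : ℕ) ^ (n + 1) ≠ 0 := pow_ne_zero _ hP.ne_zero
    set ρ := ζ ^ ((6 - p) * p ^ (M - n - 1)) with hρ
    set O := (mu_fin hpn1).toFinset with hO
    set orb : Wb p := ∑ η ∈ O, Finsupp.single ((η * ε, 0) : Idx) (1 : ZMod p) with horb
    set cc := T (ε, 0) with hcc
    -- values of T on the orbit
    have hstep : ∀ (z : ℂ) (l : ℕ), T (ρ * z, l) = T (z, l) := by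
      intro z l
      conv_lhs => rw [← hinv]
      exact Finsupp.mapDomain_apply hfinj T (z, l)
    have hTorb : ∀ η ∈ mu (p ^ (n + 1)), T (η * ε, 0) = cc := by
      have hpow : ∀ k : ℕ, T (ρ ^ k * ε, 0) = cc := by
        intro k
        induction k with
        | zero => rw [pow_zero, one_mul, hcc]
        | succ k ihk => rw [pow_succ, mul_comm (ρ ^ k) ρ, mul_assoc, hstep, ihk]
      intro η hη
      obtain ⟨k, hk, rfl⟩ := hρprim.eq_pow_of_pow_eq_one (mem_mu.1 hη)
      exact hpow k
    -- values of the orbit sum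
    have horb1 : ∀ η ∈ mu (p ^ (n + 1)), orb (η * ε, 0) = 1 := by
      intro η hη
      rw [horb, Finsupp.finset_sum_apply]
      have h0 : ∀ b ∈ O, b ≠ η →
          (Finsupp.single ((b * ε, 0) : Idx) (1 : ZMod p)) (η * ε, 0) = 0 := by
        intro b _ hbη
        refine Finsupp.single_eq_of_ne' fun hcon => hbη ?_
        exact mul_right_cancel₀ hεne (congrArg Prod.fst hcon)
      rw [Finset.sum_eq_single_of_mem η ((mu_fin hpn1).mem_toFinset.2 hη) h0]
      exact Finsupp.single_eq_same
    have horb2 : ∀ j : Idx, (∀ η ∈ mu (p ^ (n + 1)), j ≠ (η * ε, 0)) → orb j = 0 := by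
      intro j hj
      rw [horb, Finsupp.finset_sum_apply]
      refine Finset.sum_eq_zero fun b hb => ?_
      exact Finsupp.single_eq_of_ne' fun hcon =>
        hj b ((mu_fin hpn1).mem_toFinset.1 hb) hcon.symm
    -- the orbit sum is invariant
    have horbinv : Finsupp.mapDomain (fun i : Idx => (ρ * i.1, i.2)) orb = orb := by
      rw [horb, ← Finsupp.lmapDomain_apply (ZMod p) (ZMod p), map_sum]
      simp only [Finsupp.lmapDomain_apply, Finsupp.mapDomain_single]
      have hρ0' : ρ ≠ 0 := hρ0
      refine Finset.sum_nbij' (fun η => ρ * η) (fun η => ρ⁻¹ * η) ?_ ?_ ?_ ?_ ?_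
      · intro a ha
        exact (mu_fin hpn1).mem_toFinset.2 (mu_mul hρmem ((mu_fin hpn1).mem_toFinset.1 ha))
      · intro a ha
        exact (mu_fin hpn1).mem_toFinset.2
          (mu_mul (mu_inv hρmem) ((mu_fin hpn1).mem_toFinset.1 ha))
      · intro a _; exact inv_mul_cancel_left₀ hρ0' a
      · intro a _; exact mul_inv_cancel_left₀ hρ0' a
      · intro a _
        rw [mul_assoc]
    set T' := T - cc • orb with hT'
    have hT'val : ∀ j : Idx, T' j = T j - cc * orb j := by
      intro j
      rw [hT', Finsupp.sub_apply, Finsupp.smul_apply, smul_eq_mul]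
    have hT'supp : T'.support ⊆ T.support.erase (ε, 0) := by
      intro j hj
      have hjne : T' j ≠ 0 := Finsupp.mem_support_iff.1 hj
      rw [Finset.mem_erase]
      constructor
      · intro hcon
        apply hjne
        have h1 := horb1 1 (one_mem_mu _)
        rw [one_mul] at h1
        rw [hcon, hT'val, h1, mul_one, ← hcc, sub_self]
      · rw [Finsupp.mem_support_iff]
        intro hTj
        apply hjne
        by_cases horbj : ∃ η ∈ mu (p ^ (n + 1)), j = (η * ε, 0)
        · obtain ⟨η, hη, rfl⟩ := horbj
          rw [hT'val, hTorb η hη, horb1 η hη, mul_one, sub_self]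
        · push_neg at horbj
          rw [hT'val, hTj, horb2 j horbj, mul_zero, sub_zero]
    have hT'card : T'.support.card ≤ m := by
      have h1 : T'.support.card ≤ (T.support.erase (ε, 0)).card :=
        Finset.card_le_card hT'supp
      have h2 := Finset.card_erase_of_mem hmem
      have h3 : 0 < T.support.card := Finset.card_pos.2 ⟨_, hmem⟩
      omega
    have hT'suppnu : ∀ i ∈ T'.support, i.1 ∈ nu p ζ ∧ i.2 = 0 := fun i hi =>
      hsupp i (Finset.mem_of_mem_erase (hT'supp hi))
    have hT'inv : Finsupp.mapDomain (fun i : Idx => (ρ * i.1, i.2)) T' = T' := by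
      rw [hT', ← Finsupp.lmapDomain_apply (ZMod p) (ZMod p), map_sub, map_smul,
        Finsupp.lmapDomain_apply, Finsupp.lmapDomain_apply, hinv, horbinv]
    have hT'mem := ih T' hT'card hT'suppnu hT'inv
    have horbmem : orb ∈ {w : Wb p | ∃ ε ∈ nu p ζ, w = ∑ᶠ η ∈ mu (p ^ (n + 1)),
        Finsupp.single ((η * ε, 0) : Idx) (1 : ZMod p)} :=
      ⟨ε, hεnu, by rw [finsum_mem_fin (mu_fin hpn1)
        (fun η => Finsupp.single ((η * ε, 0) : Idx) (1 : ZMod p))]⟩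
    have hTsum : T = T' + cc • orb := by rw [hT']; abel
    rw [hTsum]
    exact Submodule.add_mem _ hT'mem
      (Submodule.smul_mem _ _ (Submodule.subset_span horbmem))


/-! ### The key lemma: twisted sums of `thetaT` lie in the span of orbit sums -/

lemma T_mem_K (hP : p.Prime) (he : e ≠ 0) (hq : 6 - p = p ^ e)
    (hζ : IsPrimitiveRoot ζ ((6 - p) * p ^ M)) {n : ℕ} (hnM : n < M) {x : ℂ}
    (hx : x ∈ mu (p ^ M)) :
    (∑ᶠ η ∈ mu (p ^ n), thetaT p M ζ (η * x)) ∈ Submodule.span (ZMod p)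
      {w : Wb p | ∃ ε ∈ nu p ζ, w = ∑ᶠ η ∈ mu (p ^ (n + 1)),
        Finsupp.single ((η * ε, 0) : Idx) (1 : ZMod p)} := by
  have hpn : (p : ℕ) ^ n ≠ 0 := pow_ne_zero n hP.ne_zero
  have hpM : (p : ℕ) ^ M ≠ 0 := pow_ne_zero M hP.ne_zero
  have hx0 : x ≠ 0 := mu_ne_zero hpM hx
  rw [finsum_mem_fin (mu_fin hpn)]
  apply mem_orbK hP he hq hζ hnM
  · intro i hi
    obtain ⟨η, hη, hi2⟩ := Finset.mem_biUnion.1 (Finsupp.support_finset_sum hi)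
    exact thetaT_support hP hq hζ _ i hi2
  · by_cases hxn : x ^ p ^ n = 1
    · -- x is itself a `p^n`-th root of unity
      have step1 : ∑ η ∈ (mu_fin hpn).toFinset, thetaT p M ζ (η * x)
          = ∑ y ∈ (mu_fin hpn).toFinset, thetaT p M ζ y := by
        refine Finset.sum_nbij' (fun η => η * x) (fun y => y * x⁻¹) ?_ ?_ ?_ ?_ ?_
        · intro a ha
          exact (mu_fin hpn).mem_toFinset.2
            (mu_mul ((mu_fin hpn).mem_toFinset.1 ha) hxn)
        · intro a ha
          exact (mu_fin hpn).mem_toFinset.2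
            (mu_mul ((mu_fin hpn).mem_toFinset.1 ha) (mu_inv hxn))
        · intro a _; rw [mul_assoc, mul_inv_cancel₀ hx0, mul_one]
        · intro a _; rw [mul_assoc, inv_mul_cancel₀ hx0, mul_one]
        · intro a _; rfl
      have hsub : (mu_fin hpn).toFinset ⊆ (mu_fin hpM).toFinset := by
        intro y hy
        exact (mu_fin hpM).mem_toFinset.2
          (mu_mono (pow_dvd_pow p (le_of_lt hnM)) ((mu_fin hpn).mem_toFinset.1 hy))
      have hsd := Finset.sum_sdiff (f := theta p ζ) hsub
      have h1mem : (1 : ℂ) ∈ (mu_fin hpn).toFinset :=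
        (mu_fin hpn).mem_toFinset.2 (one_mem_mu _)
      have h1 : ∑ y ∈ (mu_fin hpn).toFinset, thetaT p M ζ y
          = thetaT p M ζ 1 + ∑ y ∈ (mu_fin hpn).toFinset, theta p ζ y := by
        rw [← Finset.add_sum_erase _ _ h1mem]
        congr 1
        rw [← Finset.sum_erase _ theta_one]
        exact Finset.sum_congr rfl fun y hy => thetaT_ne (Finset.ne_of_mem_erase hy)
      have step2 : ∑ η ∈ (mu_fin hpn).toFinset, thetaT p M ζ (η * x)
          = -∑ y ∈ (mu_fin hpM).toFinset \ (mu_fin hpn).toFinset, theta p ζ y := by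
        rw [step1, h1, thetaT_one hpM, ← hsd]
        abel
      rw [step2, ← Finsupp.lmapDomain_apply (ZMod p) (ZMod p), map_neg,
        Finsupp.lmapDomain_apply]
      rw [sum_theta_invariant hP he hq hζ hnM _ ?hmem ?hcl]
      case hmem =>
        intro y hy
        obtain ⟨hyM, hyn⟩ := Finset.mem_sdiff.1 hy
        refine ⟨(mu_fin hpM).mem_toFinset.1 hyM, fun hcon => ?_⟩
        subst hcon
        exact hyn ((mu_fin hpn).mem_toFinset.2 (one_mem_mu _))
      case hcl =>
        intro y hy c hc
        obtain ⟨hyM, hyn⟩ := Finset.mem_sdiff.1 hy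
        have hy1 : y ≠ 1 := fun hcon => by
          subst hcon; exact hyn ((mu_fin hpn).mem_toFinset.2 (one_mem_mu _))
        obtain ⟨hs1, _, _, hs4⟩ :=
          sigma_spec hP he hq hζ hnM ((mu_fin hpM).mem_toFinset.1 hyM) hy1 c hc
        rw [Finset.mem_sdiff]
        refine ⟨(mu_fin hpM).mem_toFinset.2 hs1, fun hcon => ?_⟩
        apply hyn
        have hw0 : (ζ ^ ((6 - p) * p ^ (M - n - 1))) ^ (c * (p : ℤ) ^ vval p ζ y) ≠ 0 :=
          zpow_ne_zero _ (pow_ne_zero _ (zeta_ne_zero hP hq hζ))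
        have hyy : y = y * (ζ ^ ((6 - p) * p ^ (M - n - 1))) ^ (c * (p : ℤ) ^ vval p ζ y) *
            ((ζ ^ ((6 - p) * p ^ (M - n - 1))) ^ (c * (p : ℤ) ^ vval p ζ y))⁻¹ := by
          rw [mul_assoc, mul_inv_cancel₀ hw0, mul_one]
        refine (mu_fin hpn).mem_toFinset.2 ?_
        rw [hyy]
        exact mu_mul ((mu_fin hpn).mem_toFinset.1 hcon) (mu_inv hs4)
    · -- no point of the coset is 1
      have hne1 : ∀ η ∈ mu (p ^ n), η * x ≠ 1 := by
        intro η hη hcon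
        apply hxn
        have hη0 : η ≠ 0 := mu_ne_zero hpn hη
        have hxeq : η⁻¹ = x := by
          rw [← mul_one η⁻¹, ← hcon, ← mul_assoc, inv_mul_cancel₀ hη0, one_mul]
        rw [← hxeq, inv_pow, mem_mu.1 hη, inv_one]
      have hinj : ∀ a ∈ (mu_fin hpn).toFinset, ∀ b ∈ (mu_fin hpn).toFinset,
          a * x = b * x → a = b := fun a _ b _ h => mul_right_cancel₀ hx0 h
      have step1 : ∑ η ∈ (mu_fin hpn).toFinset, thetaT p M ζ (η * x)
          = ∑ y ∈ (mu_fin hpn).toFinset.image (· * x), theta p ζ y := by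
        rw [Finset.sum_image hinj]
        exact Finset.sum_congr rfl fun η hη =>
          thetaT_ne (hne1 η ((mu_fin hpn).mem_toFinset.1 hη))
      rw [step1]
      refine sum_theta_invariant hP he hq hζ hnM _ ?_ ?_
      · intro y hy
        obtain ⟨η, hη, rfl⟩ := Finset.mem_image.1 hy
        have hημ := (mu_fin hpn).mem_toFinset.1 hη
        exact ⟨mu_mul (mu_mono (pow_dvd_pow p (le_of_lt hnM)) hημ) hx, hne1 η hημ⟩
      · intro y hy c hc
        obtain ⟨η, hη, rfl⟩ := Finset.mem_image.1 hy
        have hημ := (mu_fin hpn).mem_toFinset.1 hη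
        have hymem : η * x ∈ mu (p ^ M) :=
          mu_mul (mu_mono (pow_dvd_pow p (le_of_lt hnM)) hημ) hx
        obtain ⟨_, _, _, hs4⟩ := sigma_spec hP he hq hζ hnM hymem (hne1 η hημ) c hc
        refine Finset.mem_image.2 ⟨η * (ζ ^ ((6 - p) * p ^ (M - n - 1))) ^
          (c * (p : ℤ) ^ vval p ζ (η * x)), ?_, by ring⟩
        exact (mu_fin hpn).mem_toFinset.2 (mu_mul hημ hs4)


/-! ### Galois action facts -/

lemma mod_mul_one {q m a : ℕ} (hq2 : 2 ≤ q) (hm : m % q = 1) (ha : a % q = 1) :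
    (m * a) % q = 1 := by
  have h1 : 1 % q = 1 := Nat.mod_eq_of_lt (by omega)
  have h2 : m ≡ 1 [MOD q] := by unfold Nat.ModEq; rw [h1]; exact hm
  have h3 : a ≡ 1 [MOD q] := by unfold Nat.ModEq; rw [h1]; exact ha
  have h4 := Nat.ModEq.mul h2 h3
  unfold Nat.ModEq at h4
  rw [one_mul, h1] at h4
  exact h4

lemma pow_zpow_comm (x : ℂ) (a : ℕ) (z : ℤ) : (x ^ a) ^ z = (x ^ z) ^ a := by
  rw [← zpow_natCast x a, ← zpow_mul, mul_comm, zpow_mul, zpow_natCast]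

lemma pow_mem_mu {k a : ℕ} {x : ℂ} (hx : x ∈ mu k) : x ^ a ∈ mu k := by
  rw [mem_mu, ← pow_mul, mul_comm, pow_mul, mem_mu.1 hx, one_pow]

lemma gal_data (hP : p.Prime) (he : e ≠ 0) (hq : 6 - p = p ^ e)
    {σ : (ZMod ((6 - p) * p ^ M))ˣ} (hσ : σ ∈ Gal p M) :
    ∃ b : ℕ, (ZMod.val (σ : ZMod ((6 - p) * p ^ M))) % (6 - p) = 1 ∧ b % (6 - p) = 1 ∧
      ¬ p ∣ ZMod.val (σ : ZMod ((6 - p) * p ^ M)) ∧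
      (∀ x ∈ mu ((6 - p) * p ^ M),
        (x ^ ZMod.val (σ : ZMod ((6 - p) * p ^ M))) ^
          ZMod.val ((σ⁻¹ : (ZMod ((6 - p) * p ^ M))ˣ) : ZMod ((6 - p) * p ^ M)) = x) ∧
      (∀ x ∈ mu ((6 - p) * p ^ M),
        (x ^ ZMod.val ((σ⁻¹ : (ZMod ((6 - p) * p ^ M))ˣ) : ZMod ((6 - p) * p ^ M))) ^
          ZMod.val (σ : ZMod ((6 - p) * p ^ M)) = x) ∧
      b = ZMod.val ((σ⁻¹ : (ZMod ((6 - p) * p ^ M))ˣ) : ZMod ((6 - p) * p ^ M)) := by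
  haveI : NeZero ((6 - p) * p ^ M) := ⟨Npos hP hq⟩
  have hq2 : 2 ≤ 6 - p := q_two_le hP he hq
  have hN2 : 2 ≤ (6 - p) * p ^ M :=
    le_trans hq2 (Nat.le_mul_of_pos_right _ (pow_pos hP.pos M))
  set a := ZMod.val (σ : ZMod ((6 - p) * p ^ M)) with ha
  set b := ZMod.val ((σ⁻¹ : (ZMod ((6 - p) * p ^ M))ˣ) : ZMod ((6 - p) * p ^ M)) with hb
  -- `a * b ≡ 1`
  have hcast : ((a * b : ℕ) : ZMod ((6 - p) * p ^ M)) = ((1 : ℕ) : ZMod ((6 - p) * p ^ M)) := by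
    rw [Nat.cast_mul, ha, hb, ZMod.natCast_val, ZMod.natCast_val, ZMod.cast_id, ZMod.cast_id,
      ← Units.val_mul, mul_inv_cancel, Units.val_one, Nat.cast_one]
  have hmod : a * b ≡ 1 [MOD (6 - p) * p ^ M] :=
    (ZMod.natCast_eq_natCast_iff _ _ _).1 hcast
  have habN : a * b % ((6 - p) * p ^ M) = 1 := by
    unfold Nat.ModEq at hmod
    rwa [Nat.mod_eq_of_lt (show 1 < (6 - p) * p ^ M by omega)] at hmod
  have hpowab : ∀ x ∈ mu ((6 - p) * p ^ M), x ^ (a * b) = x := by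
    intro x hx
    conv_lhs => rw [← Nat.div_add_mod (a * b) ((6 - p) * p ^ M), habN]
    rw [pow_add, pow_mul, mem_mu.1 hx, one_pow, one_mul, pow_one]
  -- residues mod `q`
  have hres : ∀ τ : (ZMod ((6 - p) * p ^ M))ˣ, τ ∈ Gal p M →
      (ZMod.val (τ : ZMod ((6 - p) * p ^ M))) % (6 - p) = 1 := by
    intro τ hτ
    have hker := MonoidHom.mem_ker.1 hτ
    have h1 := congrArg Units.val hker
    rw [Units.coe_map, Units.val_one] at h1
    have h2 : ((ZMod.val (τ : ZMod ((6 - p) * p ^ M)) : ℕ) : ZMod (6 - p)) =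
        ((1 : ℕ) : ZMod (6 - p)) := by
      rw [ZMod.natCast_val, Nat.cast_one]
      exact h1
    have h3 := (ZMod.natCast_eq_natCast_iff _ _ _).1 h2
    unfold Nat.ModEq at h3
    rwa [Nat.mod_eq_of_lt (show 1 < 6 - p by omega)] at h3
  have hpa : ¬ p ∣ a := by
    intro hpa
    have hco := ZMod.val_coe_unit_coprime σ
    have hpN : p ∣ (6 - p) * p ^ M := by
      rw [Npow hq]
      exact dvd_pow_self p (by omega)
    have := Nat.dvd_gcd hpa hpN
    rw [Nat.Coprime] at hco
    rw [hco] at this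
    exact hP.one_lt.ne' (Nat.dvd_one.1 this)
  refine ⟨b, hres σ hσ, hres σ⁻¹ ((Gal p M).inv_mem hσ), hpa, ?_, ?_, rfl⟩
  · intro x hx
    rw [← pow_mul]
    exact hpowab x hx
  · intro x hx
    rw [← pow_mul, mul_comm]
    exact hpowab x hx

lemma vval_pow_gal (hP : p.Prime) (hq : 6 - p = p ^ e)
    (hζ : IsPrimitiveRoot ζ ((6 - p) * p ^ M)) {a b : ℕ} (hpa : ¬ p ∣ a)
    (hab : ∀ x ∈ mu ((6 - p) * p ^ M), (x ^ a) ^ b = x) {y : ℂ}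
    (hy : y ∈ mu ((6 - p) * p ^ M)) (hy1 : y ≠ 1) :
    vval p ζ (y ^ a) = vval p ζ y := by
  haveI : NeZero ((6 - p) * p ^ M) := ⟨Npos hP hq⟩
  obtain ⟨i, hiN, hiy⟩ := hζ.eq_pow_of_pow_eq_one (mem_mu.1 hy)
  have hi0 : i ≠ 0 := by rintro rfl; rw [pow_zero] at hiy; exact hy1 hiy.symm
  have ha0 : a ≠ 0 := fun h => hpa (h ▸ dvd_zero p)
  have hζia : ζ ^ (i * a) = y ^ a := by rw [pow_mul, hiy]
  have hNia : ¬ (6 - p) * p ^ M ∣ i * a := by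
    intro h
    have hya : y ^ a = 1 := by rw [← hζia]; exact (hζ.pow_eq_one_iff_dvd _).2 h
    exact hy1 (by rw [← hab y hy, hya, one_pow])
  have hNi : ¬ (6 - p) * p ^ M ∣ i := fun h =>
    absurd (Nat.le_of_dvd (Nat.pos_of_ne_zero hi0) h) (not_le.2 hiN)
  rw [vval_eq hP hq hζ (Nat.pos_of_ne_zero (Nat.mul_ne_zero hi0 ha0)) hNia hζia,
    vval_eq hP hq hζ (Nat.pos_of_ne_zero hi0) hNi hiy]
  haveI := Fact.mk hP
  rw [padicValNat.mul hi0 ha0, padicValNat.eq_zero_of_not_dvd hpa, add_zero]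

lemma mem_lam_pow_gal (hP : p.Prime) (he : e ≠ 0) (hq : 6 - p = p ^ e)
    (hζ : IsPrimitiveRoot ζ ((6 - p) * p ^ M)) {a b : ℕ} (ha1 : a % (6 - p) = 1)
    (hpa : ¬ p ∣ a) (hab : ∀ x ∈ mu ((6 - p) * p ^ M), (x ^ a) ^ b = x) {y : ℂ}
    (hy : y ∈ mu ((6 - p) * p ^ M)) (hy1 : y ≠ 1) {c : ℤ} {ε : ℂ}
    (hε : ε ∈ Lam p ζ c y) : ε ^ a ∈ Lam p ζ c (y ^ a) := by
  obtain ⟨⟨m2, hm2, rfl⟩, hεpow⟩ := hε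
  constructor
  · exact ⟨m2 * a, mod_mul_one (q_two_le hP he hq) hm2 ha1, by rw [pow_mul]⟩
  · rw [vval_pow_gal hP hq hζ hpa hab hy hy1, pow_zpow_comm, hεpow]

lemma mem_lam_pow_gal_inv (hP : p.Prime) (he : e ≠ 0) (hq : 6 - p = p ^ e)
    (hζ : IsPrimitiveRoot ζ ((6 - p) * p ^ M)) {a b : ℕ} (hb1 : b % (6 - p) = 1)
    (hpa : ¬ p ∣ a) (hab : ∀ x ∈ mu ((6 - p) * p ^ M), (x ^ a) ^ b = x) {y : ℂ}
    (hy : y ∈ mu ((6 - p) * p ^ M)) (hy1 : y ≠ 1) {c : ℤ} {ε' : ℂ}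
    (hε' : ε' ∈ Lam p ζ c (y ^ a)) : ε' ^ b ∈ Lam p ζ c y := by
  obtain ⟨⟨m2, hm2, rfl⟩, hεpow⟩ := hε'
  rw [vval_pow_gal hP hq hζ hpa hab hy hy1] at hεpow
  constructor
  · exact ⟨m2 * b, mod_mul_one (q_two_le hP he hq) hm2 hb1, by rw [pow_mul]⟩
  · rw [pow_zpow_comm, hεpow]
    exact hab y hy

lemma thetaSum_pow_gal (hP : p.Prime) (he : e ≠ 0) (hq : 6 - p = p ^ e)
    (hζ : IsPrimitiveRoot ζ ((6 - p) * p ^ M)) {a b : ℕ} (ha1 : a % (6 - p) = 1)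
    (hb1 : b % (6 - p) = 1) (hpa : ¬ p ∣ a)
    (hab : ∀ x ∈ mu ((6 - p) * p ^ M), (x ^ a) ^ b = x)
    (hba : ∀ x ∈ mu ((6 - p) * p ^ M), (x ^ b) ^ a = x) {y : ℂ}
    (hy : y ∈ mu ((6 - p) * p ^ M)) (hy1 : y ≠ 1) (c : ℤ) :
    Finsupp.mapDomain (fun i : Idx => (i.1 ^ a, i.2)) (thetaSum p ζ c y) =
      thetaSum p ζ c (y ^ a) := by
  rw [thetaSum_eq hP hq hζ, thetaSum_eq hP hq hζ,
    ← Finsupp.lmapDomain_apply (ZMod p) (ZMod p), map_sum]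
  simp only [Finsupp.lmapDomain_apply, Finsupp.mapDomain_single]
  refine Finset.sum_nbij' (fun ε => ε ^ a) (fun ε' => ε' ^ b) ?_ ?_ ?_ ?_ ?_
  · intro ε hε
    exact (lam_fin hP hq hζ).mem_toFinset.2
      (mem_lam_pow_gal hP he hq hζ ha1 hpa hab hy hy1
        ((lam_fin hP hq hζ).mem_toFinset.1 hε))
  · intro ε hε
    exact (lam_fin hP hq hζ).mem_toFinset.2
      (mem_lam_pow_gal_inv hP he hq hζ hb1 hpa hab hy hy1
        ((lam_fin hP hq hζ).mem_toFinset.1 hε))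
  · intro ε hε
    exact hab ε (nu_subset_mu hζ (lam_subset_nu ((lam_fin hP hq hζ).mem_toFinset.1 hε)))
  · intro ε hε
    exact hba ε (nu_subset_mu hζ (lam_subset_nu ((lam_fin hP hq hζ).mem_toFinset.1 hε)))
  · intro ε _; rfl

lemma theta_pow_gal (hP : p.Prime) (he : e ≠ 0) (hq : 6 - p = p ^ e)
    (hζ : IsPrimitiveRoot ζ ((6 - p) * p ^ M)) {a b : ℕ} (ha1 : a % (6 - p) = 1)
    (hb1 : b % (6 - p) = 1) (hpa : ¬ p ∣ a)
    (hab : ∀ x ∈ mu ((6 - p) * p ^ M), (x ^ a) ^ b = x)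
    (hba : ∀ x ∈ mu ((6 - p) * p ^ M), (x ^ b) ^ a = x) {y : ℂ}
    (hy : y ∈ mu ((6 - p) * p ^ M)) :
    Finsupp.mapDomain (fun i : Idx => (i.1 ^ a, i.2)) (theta p ζ y) = theta p ζ (y ^ a) := by
  by_cases hy1 : y = 1
  · subst hy1
    rw [one_pow, theta_one, Finsupp.mapDomain_zero]
  · have hya1 : y ^ a ≠ 1 := fun h => hy1 (by rw [← hab y hy, h, one_pow])
    rw [theta_eq hy1, theta_eq hya1, Finsupp.mapDomain_add,
      thetaSum_pow_gal hP he hq hζ ha1 hb1 hpa hab hba hy hy1,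
      thetaSum_pow_gal hP he hq hζ ha1 hb1 hpa hab hba hy hy1]

lemma thetaT_pow_gal (hP : p.Prime) (he : e ≠ 0) (hq : 6 - p = p ^ e)
    (hζ : IsPrimitiveRoot ζ ((6 - p) * p ^ M)) {a b : ℕ} (ha1 : a % (6 - p) = 1)
    (hb1 : b % (6 - p) = 1) (hpa : ¬ p ∣ a)
    (hab : ∀ x ∈ mu ((6 - p) * p ^ M), (x ^ a) ^ b = x)
    (hba : ∀ x ∈ mu ((6 - p) * p ^ M), (x ^ b) ^ a = x) {x : ℂ}
    (hx : x ∈ mu (p ^ M)) :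
    Finsupp.mapDomain (fun i : Idx => (i.1 ^ a, i.2)) (thetaT p M ζ x) =
      thetaT p M ζ (x ^ a) := by
  have hpM : (p : ℕ) ^ M ≠ 0 := pow_ne_zero M hP.ne_zero
  have hsub : mu (p ^ M) ⊆ mu ((6 - p) * p ^ M) := mu_mono (dvd_mul_left _ _)
  by_cases hx1 : x = 1
  · subst hx1
    rw [one_pow, thetaT_one hpM, ← Finsupp.lmapDomain_apply (ZMod p) (ZMod p), map_neg,
      map_sum]
    simp only [Finsupp.lmapDomain_apply]
    congr 1
    rw [Finset.sum_congr rfl fun y hy =>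
      theta_pow_gal hP he hq hζ ha1 hb1 hpa hab hba (hsub ((mu_fin hpM).mem_toFinset.1 hy))]
    refine Finset.sum_nbij' (fun y => y ^ a) (fun y => y ^ b) ?_ ?_ ?_ ?_ ?_
    · intro y hy
      exact (mu_fin hpM).mem_toFinset.2 (pow_mem_mu ((mu_fin hpM).mem_toFinset.1 hy))
    · intro y hy
      exact (mu_fin hpM).mem_toFinset.2 (pow_mem_mu ((mu_fin hpM).mem_toFinset.1 hy))
    · intro y hy
      exact hab y (hsub ((mu_fin hpM).mem_toFinset.1 hy))
    · intro y hy
      exact hba y (hsub ((mu_fin hpM).mem_toFinset.1 hy))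
    · intro y _; rfl
  · have hxa1 : x ^ a ≠ 1 := fun h => hx1 (by rw [← hab x (hsub hx), h, one_pow])
    rw [thetaT_ne hx1, thetaT_ne hxa1]
    exact theta_pow_gal hP he hq hζ ha1 hb1 hpa hab hba (hsub hx)


/-! ### Evaluating `Rtil` on basis vectors -/

lemma moveR_zero_eval (a : Fin 2 → Idx) (b : Idx) :
    moveR 0 a b = ![((a 0).1, (a 1).2), b] := by
  funext j
  fin_cases j <;> simp [moveR]

lemma Rtil_single (a : Fin 2 → Idx) :
    Rtil p M ζ 2 0 (Finsupp.single a (1 : ZMod p)) = RtilBase p M ζ 2 0 a := by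
  rw [Rtil, Finsupp.linearCombination_single, one_smul]

lemma RtilBase_eval (x₁ x₂ : ℂ) :
    RtilBase p M ζ 2 0 ![(x₁, 0), (x₂, 0)] =
      Finsupp.mapDomain (fun b : Idx => ![((x₁, 0) : Idx), b])
        (thetaT p M ζ (x₂ / x₁)) := by
  rw [RtilBase, dif_pos (show (0 : ℕ) + 1 < 2 by norm_num)]
  have hc : ((![((x₁, 0) : Idx), ((x₂, 0) : Idx)]) (⟨0, by norm_num⟩ : Fin 2)).2 = 0 := rfl
  rw [if_pos hc]
  congr 1
  funext b
  rw [moveR_zero_eval]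
  simp

lemma actW_single (σ : Gal p M) (a : Fin 2 → Idx) (c : ZMod p) :
    actW p M 2 σ (Finsupp.single a c) =
      Finsupp.single (actTup p M (σ : (ZMod ((6 - p) * p ^ M))ˣ) a) c := by
  rw [actW, Finsupp.lmapDomain_apply, Finsupp.mapDomain_single]

lemma actA_apply' (g : GA p M) (X : Wt p 2) :
    actA p M 2 g X = ∑ σ ∈ g.coeff.support, g.coeff σ • actW p M 2 σ X := by
  rw [actA, Finsupp.sum, LinearMap.sum_apply]
  exact Finset.sum_congr rfl fun σ _ => LinearMap.smul_apply _ _ _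

lemma nu_div_mem_mu (hP : p.Prime) (he : e ≠ 0) (hq : 6 - p = p ^ e)
    (hζ : IsPrimitiveRoot ζ ((6 - p) * p ^ M)) {ε₁ ε₂ : ℂ}
    (h1 : ε₁ ∈ nu p ζ) (h2 : ε₂ ∈ nu p ζ) : ε₂ / ε₁ ∈ mu (p ^ M) := by
  obtain ⟨m1, hm1, rfl⟩ := h1
  obtain ⟨m2, hm2, rfl⟩ := h2
  have hmod : m2 * p ^ M ≡ m1 * p ^ M [MOD (6 - p) * p ^ M] :=
    (show m2 ≡ m1 [MOD 6 - p] by unfold Nat.ModEq; rw [hm1, hm2]).mul_right' _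
  have heq : ζ ^ (m2 * p ^ M) = ζ ^ (m1 * p ^ M) := (zeta_pow_eq_iff hP hq hζ).2 hmod
  rw [mem_mu, div_pow, ← pow_mul, ← pow_mul, heq,
    div_self (pow_ne_zero _ (zeta_ne_zero hP hq hζ))]

lemma Rtil_actW_single (hP : p.Prime) (he : e ≠ 0) (hq : 6 - p = p ^ e)
    (hζ : IsPrimitiveRoot ζ ((6 - p) * p ^ M)) (σ : Gal p M) {ε₁ ε₂ : ℂ}
    (h1 : ε₁ ∈ nu p ζ) (h2 : ε₂ ∈ nu p ζ) :
    Rtil p M ζ 2 0 (actW p M 2 σ (Finsupp.single ![((ε₁, 0) : Idx), ((ε₂, 0) : Idx)]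
        (1 : ZMod p))) =
      actW p M 2 σ (Rtil p M ζ 2 0
        (Finsupp.single ![((ε₁, 0) : Idx), ((ε₂, 0) : Idx)] (1 : ZMod p))) := by
  obtain ⟨b, ha1, hb1, hpa, hab, hba, hbdef⟩ := gal_data hP he hq σ.2
  subst hbdef
  set a := ZMod.val ((σ : (ZMod ((6 - p) * p ^ M))ˣ) : ZMod ((6 - p) * p ^ M)) with hadef
  have hact : actTup p M (σ : (ZMod ((6 - p) * p ^ M))ˣ) ![((ε₁, 0) : Idx), ((ε₂, 0) : Idx)]
      = ![((ε₁ ^ a, 0) : Idx), ((ε₂ ^ a, 0) : Idx)] := by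
    funext j
    fin_cases j <;> simp [actTup, gact, hadef]
  rw [actW_single, Rtil_single, Rtil_single, hact, RtilBase_eval, RtilBase_eval]
  rw [← div_pow]
  rw [← thetaT_pow_gal hP he hq hζ ha1 hb1 hpa hab hba (nu_div_mem_mu hP he hq hζ h1 h2)]
  rw [actW, Finsupp.lmapDomain_apply, ← Finsupp.mapDomain_comp, ← Finsupp.mapDomain_comp]
  congr 1
  funext i
  show (![((ε₁ ^ a, 0) : Idx), (i.1 ^ a, i.2)] : Fin 2 → Idx)
      = actTup p M (σ : (ZMod ((6 - p) * p ^ M))ˣ) ![((ε₁, 0) : Idx), i]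
  funext j
  fin_cases j <;> simp [actTup, gact, hadef]


end Aux
-- ===== AUX END =====

/-- For all integers `m, n ≥ 0`, one has `R̃(V(m,n)) ⊆ V(m,n+1)`. -/
theorem Rtil_Vmn_subset (p M : ℕ) (hp : p = 2 ∨ p = 3) (ζ : ℂ)
    (hζ : IsPrimitiveRoot ζ ((6 - p) * p ^ M)) (m n : ℕ) :
    ∀ u ∈ Vmn p M ζ m n, Rtil p M ζ 2 0 u ∈ Vmn p M ζ m (n + 1) := by
  intro u hu
  obtain ⟨e, he, hq⟩ : ∃ e : ℕ, e ≠ 0 ∧ 6 - p = p ^ e := by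
    rcases hp with rfl | rfl
    · exact ⟨2, by norm_num, by norm_num⟩
    · exact ⟨1, by norm_num, by norm_num⟩
  have hP : p.Prime := by
    rcases hp with rfl | rfl
    · exact Nat.prime_two
    · exact Nat.prime_three
  by_cases hnM : n ≤ M
  swap
  · rw [Vmn, if_neg hnM] at hu
    rw [(Submodule.mem_bot _).1 hu, map_zero]
    exact Submodule.zero_mem _
  rw [Vmn, if_pos hnM] at hu
  refine Submodule.span_induction ?_ ?_ ?_ ?_ hu
  · rintro w ⟨g, hg, ε₁, hε₁, ε₂, hε₂, rfl⟩
    have hpn : (p : ℕ) ^ n ≠ 0 := pow_ne_zero n hP.ne_zero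
    have hXfin : (∑ᶠ η ∈ mu (p ^ n),
        Finsupp.single (![((ε₁, 0) : Idx), ((η * ε₂, 0) : Idx)]) (1 : ZMod p)) =
        ∑ η ∈ (mu_fin hpn).toFinset,
          Finsupp.single (![((ε₁, 0) : Idx), ((η * ε₂, 0) : Idx)]) (1 : ZMod p) :=
      finsum_mem_fin (mu_fin hpn) _
    have hcomm : Rtil p M ζ 2 0 (actA p M 2 g (∑ᶠ η ∈ mu (p ^ n),
        Finsupp.single (![((ε₁, 0) : Idx), ((η * ε₂, 0) : Idx)]) (1 : ZMod p))) =
        actA p M 2 g (Rtil p M ζ 2 0 (∑ᶠ η ∈ mu (p ^ n),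
          Finsupp.single (![((ε₁, 0) : Idx), ((η * ε₂, 0) : Idx)]) (1 : ZMod p))) := by
      rw [actA_apply', actA_apply', map_sum]
      refine Finset.sum_congr rfl fun σ _ => ?_
      rw [map_smul]
      congr 1
      rw [hXfin]
      simp only [map_sum]
      refine Finset.sum_congr rfl fun η hη => ?_
      exact Rtil_actW_single hP he hq hζ σ hε₁
        (mu_mul_nu hP he hq hζ hnM ((mu_fin hpn).mem_toFinset.1 hη) hε₂)
    have hRX : Rtil p M ζ 2 0 (∑ᶠ η ∈ mu (p ^ n),
        Finsupp.single (![((ε₁, 0) : Idx), ((η * ε₂, 0) : Idx)]) (1 : ZMod p)) =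
        Finsupp.mapDomain (fun b : Idx => ![((ε₁, 0) : Idx), b])
          (∑ η ∈ (mu_fin hpn).toFinset, thetaT p M ζ (η * (ε₂ / ε₁))) := by
      rw [hXfin, map_sum, ← Finsupp.lmapDomain_apply (ZMod p) (ZMod p), map_sum]
      simp only [Finsupp.lmapDomain_apply]
      refine Finset.sum_congr rfl fun η hη => ?_
      rw [Rtil_single, RtilBase_eval]
      congr 1
      rw [mul_div_assoc]
    by_cases hnM' : n < M
    · -- `n < M`: use the orbit decomposition
      rw [hcomm, hRX]
      have hTK := T_mem_K hP he hq hζ hnM' (nu_div_mem_mu hP he hq hζ hε₁ hε₂)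
      rw [finsum_mem_fin (mu_fin hpn)] at hTK
      set Ψ : Wb p →ₗ[ZMod p] Wt p 2 :=
        (actA p M 2 g).comp (Finsupp.lmapDomain (ZMod p) (ZMod p)
          (fun b : Idx => ![((ε₁, 0) : Idx), b])) with hΨ
      have h2 := Submodule.mem_map_of_mem (f := Ψ) hTK
      rw [Submodule.map_span] at h2
      have hpn1 : (p : ℕ) ^ (n + 1) ≠ 0 := pow_ne_zero _ hP.ne_zero
      have himgsub : Ψ '' {w : Wb p | ∃ ε ∈ nu p ζ, w = ∑ᶠ η ∈ mu (p ^ (n + 1)),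
          Finsupp.single ((η * ε, 0) : Idx) (1 : ZMod p)} ⊆
          {w : Wt p 2 | ∃ g' ∈ IG p M ^ m, ∃ a ∈ nu p ζ, ∃ b ∈ nu p ζ,
            w = actA p M 2 g' (∑ᶠ η ∈ mu (p ^ (n + 1)),
              Finsupp.single (![((a, 0) : Idx), ((η * b, 0) : Idx)]) (1 : ZMod p))} := by
        rintro w ⟨v, ⟨ε', hε', rfl⟩, rfl⟩
        refine ⟨g, hg, ε₁, hε₁, ε', hε', ?_⟩
        rw [hΨ, LinearMap.comp_apply, Finsupp.lmapDomain_apply]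
        congr 1
        rw [finsum_mem_fin (mu_fin hpn1), finsum_mem_fin (mu_fin hpn1),
          ← Finsupp.lmapDomain_apply (ZMod p) (ZMod p), map_sum]
        simp only [Finsupp.lmapDomain_apply, Finsupp.mapDomain_single]
      rw [Vmn, if_pos (by omega : n + 1 ≤ M)]
      have h3 := Submodule.span_mono himgsub h2
      have h4 : actA p M 2 g (Finsupp.mapDomain (fun b : Idx => ![((ε₁, 0) : Idx), b])
          (∑ η ∈ (mu_fin hpn).toFinset, thetaT p M ζ (η * (ε₂ / ε₁)))) =
          Ψ (∑ η ∈ (mu_fin hpn).toFinset, thetaT p M ζ (η * (ε₂ / ε₁))) := by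
        rw [hΨ, LinearMap.comp_apply, Finsupp.lmapDomain_apply]
      rw [h4]
      exact h3
    · -- `n = M`: the sum of `thetaT` vanishes
      have hnMeq : n = M := le_antisymm hnM (not_lt.1 hnM')
      subst hnMeq
      rw [hcomm, hRX]
      have hx := nu_div_mem_mu hP he hq hζ hε₁ hε₂
      have hx0 : ε₂ / ε₁ ≠ 0 := mu_ne_zero hpn hx
      have hT0 : ∑ η ∈ (mu_fin hpn).toFinset, thetaT p n ζ (η * (ε₂ / ε₁)) = 0 := by
        have hre : (∑ η ∈ (mu_fin hpn).toFinset, thetaT p n ζ (η * (ε₂ / ε₁)))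
            = ∑ y ∈ (mu_fin hpn).toFinset, thetaT p n ζ y := by
          refine Finset.sum_nbij' (fun η => η * (ε₂ / ε₁)) (fun y => y * (ε₂ / ε₁)⁻¹)
            ?_ ?_ ?_ ?_ ?_
          · intro η hη
            exact (mu_fin hpn).mem_toFinset.2
              (mu_mul ((mu_fin hpn).mem_toFinset.1 hη) hx)
          · intro y hy
            exact (mu_fin hpn).mem_toFinset.2
              (mu_mul ((mu_fin hpn).mem_toFinset.1 hy) (mu_inv hx))
          · intro η _; rw [mul_assoc, mul_inv_cancel₀ hx0, mul_one]
          · intro y _; rw [mul_assoc, inv_mul_cancel₀ hx0, mul_one]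
          · intro η _; rfl
        rw [hre]
        exact sum_thetaT_zero hpn
      rw [hT0, Finsupp.mapDomain_zero, map_zero]
      exact Submodule.zero_mem _
  · rw [map_zero]; exact Submodule.zero_mem _
  · intro x y _ _ hx hy
    rw [map_add]
    exact Submodule.add_mem _ hx hy
  · intro a x _ hx
    rw [map_smul]
    exact Submodule.smul_mem _ _ hx

end CycloMZV
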